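/- Let q, p ∈ ℂ with q ≠ 0 and p² = q. Let S be the Solution II flip: the 4-index array with nonzero entries S^{11}_{11} = -q², S^{12}_{21} = q, S^{21}_{12} = -q⁻², S^{21}_{21} = -1-q⁻¹, S^{22}_{22} = q⁻¹, let P be the wedge projector (nonzero entries P^{12}_{12} = 1/2, P^{12}_{21} = -q/2, P^{21}_{12} = -q⁻¹/2, P^{21}_{21} = 1/2), and let g have nonzero entries g^{12} = p, g^{21} = p⁻¹. Then: (a) P^{ij}_{lm} + Σ_{h,k} S^{ij}_{hk} P^{hk}_{lm} = 0 for all i,j,l,m; (b) Σ_{m,n,r} S^{im}_{ln} g^{nr} S^{jk}_{mr} = g^{ij} δ^k_l for all i,j,k,l; (c) if moreover |q| = 1, then Σ_{k,l} conj(S^{ji}_{kl}) S^{lk}_{mn} = δ^i_m δ^j_n for all i,j,m,n. -/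

import Mathlib

set_option maxHeartbeats 1000000
set_option linter.unnecessarySeqFocus false


open Finset

/-- The Solution II flip: nonzero entries `S^{11}_{11} = -q²`,
`S^{12}_{21} = q`, `S^{21}_{12} = -q⁻²`, `S^{21}_{21} = -1-q⁻¹`,
`S^{22}_{22} = q⁻¹`. -/
noncomputable def solIIS (q : ℂ) : Fin 2 → Fin 2 → Fin 2 → Fin 2 → ℂ :=
  fun i j k l =>
    if i = 0 ∧ j = 0 ∧ k = 0 ∧ l = 0 then -q ^ 2
    else if i = 0 ∧ j = 1 ∧ k = 1 ∧ l = 0 then q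
    else if i = 1 ∧ j = 0 ∧ k = 0 ∧ l = 1 then -q⁻¹ ^ 2
    else if i = 1 ∧ j = 0 ∧ k = 1 ∧ l = 0 then -1 - q⁻¹
    else if i = 1 ∧ j = 1 ∧ k = 1 ∧ l = 1 then q⁻¹
    else 0

/-- The wedge-product projector of the Wess–Zumino calculus on the real quantum
plane: nonzero entries `P^{12}_{12} = 1/2`, `P^{12}_{21} = -q/2`,
`P^{21}_{12} = -q⁻¹/2`, `P^{21}_{21} = 1/2`. -/
noncomputable def wedgeP (q : ℂ) : Fin 2 → Fin 2 → Fin 2 → Fin 2 → ℂ :=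
  fun i j k l =>
    if i = 0 ∧ j = 1 ∧ k = 0 ∧ l = 1 then 1 / 2
    else if i = 0 ∧ j = 1 ∧ k = 1 ∧ l = 0 then -q / 2
    else if i = 1 ∧ j = 0 ∧ k = 0 ∧ l = 1 then -q⁻¹ / 2
    else if i = 1 ∧ j = 0 ∧ k = 1 ∧ l = 0 then 1 / 2
    else 0

/-- The metric of Solution II: nonzero entries `g^{12} = p`, `g^{21} = p⁻¹`
with `p² = q`. -/
noncomputable def solIIg (p : ℂ) : Fin 2 → Fin 2 → ℂ :=
  fun i j =>
    if i = 0 ∧ j = 1 then p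
    else if i = 1 ∧ j = 0 then p⁻¹
    else 0

/-- Solution II: (a) the consistency condition `π∘(σ+1) = 0`, (b) metric
compatibility, and (c) (for `|q| = 1`) the flip reality condition all hold. -/
theorem solII (q p : ℂ) (hq : q ≠ 0) (hp : p ^ 2 = q) :
    (∀ i j l m : Fin 2,
        wedgeP q i j l m
          + ∑ h : Fin 2, ∑ k : Fin 2, solIIS q i j h k * wedgeP q h k l m = 0)
    ∧ (∀ i j k l : Fin 2,
        (∑ m : Fin 2, ∑ n : Fin 2, ∑ r : Fin 2,
            solIIS q i m l n * solIIg p n r * solIIS q j k m r)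
          = solIIg p i j * (if k = l then 1 else 0))
    ∧ (‖q‖ = 1 →
        ∀ i j m n : Fin 2,
          (∑ k : Fin 2, ∑ l : Fin 2,
              (starRingEnd ℂ) (solIIS q j i k l) * solIIS q l k m n)
            = (if i = m then 1 else 0) * (if j = n then 1 else 0)) := by
  have hp0 : p ≠ 0 := by
    intro h; apply hq; rw [← hp, h]; ring
  refine ⟨?_, ?_, ?_⟩
  · intro i j l m
    fin_cases i <;> fin_cases j <;> fin_cases l <;> fin_cases m <;>
      norm_num [solIIS, wedgeP, Fin.sum_univ_two] <;> field_simp <;> ring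
  · subst hp
    intro i j k l
    fin_cases i <;> fin_cases j <;> fin_cases k <;> fin_cases l <;>
      norm_num [solIIS, solIIg, Fin.sum_univ_two] <;> field_simp <;> ring
  · intro habs i j m n
    have hcq : (starRingEnd ℂ) q = q⁻¹ := by
      have h1 : q * (starRingEnd ℂ) q = 1 := by
        rw [Complex.mul_conj, ← Complex.sq_norm, habs]; norm_num
      field_simp
      linear_combination h1
    have hcqi : (starRingEnd ℂ) q⁻¹ = q := by
      rw [map_inv₀, hcq, inv_inv]
    fin_cases i <;> fin_cases j <;> fin_cases m <;> fin_cases n <;>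
      norm_num [solIIS, Fin.sum_univ_two, hcq, hcqi] <;> field_simp <;> ring
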